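/- Let A = QΛQ^T be an n×n real symmetric matrix, let t, μ be reals with t ≠ λ_k and t ≠ μ, v ∈ ℝ^n with ‖v‖=1, p = Q(Λ − tI)^{-1}Q^T v, and let p̃ = Q^{(m)}(Δ^{(m)})^{-1}(Q^{(m)})^T v + (1/(μ − t)) r, where Δ^{(m)} = diag(λ_1 − t, …, λ_m − t) and r = v − Q^{(m)}(Q^{(m)})^T v. Then ‖p − p̃‖² = Σ_{k=m+1}^n ((μ − λ_k)⟨q_k, v⟩ / ((μ − t)(λ_k − t)))², and hence ‖p − p̃‖ ≤ max_{m+1≤k≤n}|λ_k − μ| / (|μ − t|·min_{m+1≤k≤n}|λ_k − t|). -/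

import Mathlib

open Matrix BigOperators

lemma sum_sq_orthonormal {n : ℕ} (q : Fin n → Fin n → ℝ)
    (horth : ∀ k l, (∑ i, q k i * q l i) = if k = l then 1 else 0)
    (S : Finset (Fin n)) (a : Fin n → ℝ) :
    ∑ i, (∑ k ∈ S, a k * q k i) ^ 2 = ∑ k ∈ S, a k ^ 2 := by
  calc ∑ i, (∑ k ∈ S, a k * q k i) ^ 2
      = ∑ i, ∑ k ∈ S, ∑ l ∈ S, (a k * q k i) * (a l * q l i) := by
        simp_rw [sq, Finset.sum_mul_sum]
    _ = ∑ k ∈ S, ∑ l ∈ S, (a k * a l) * ∑ i, q k i * q l i := by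
        rw [Finset.sum_comm]
        refine Finset.sum_congr rfl fun k _ => ?_
        rw [Finset.sum_comm]
        refine Finset.sum_congr rfl fun l _ => ?_
        rw [Finset.mul_sum]
        exact Finset.sum_congr rfl fun i _ => by ring
    _ = ∑ k ∈ S, a k ^ 2 := by
        refine Finset.sum_congr rfl fun k hk => ?_
        rw [Finset.sum_eq_single k]
        · rw [horth k k, if_pos rfl, mul_one, sq]
        · intro l _ hne
          rw [horth k l, if_neg (Ne.symm hne), mul_zero]
        · intro hk'; exact absurd hk hk'

/-- exact error of the first-order truncated eigenvector formula
and the resulting bound. -/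
theorem first_order_eigenvector_error
    (n m : ℕ) (hm : m < n)
    (A Q : Matrix (Fin n) (Fin n) ℝ) (d : Fin n → ℝ)
    (hQ : Qᵀ * Q = 1)
    (hA : A = Q * Matrix.diagonal d * Qᵀ)
    (q : Fin n → Fin n → ℝ) (hq : ∀ i j, q i j = Q j i)
    (v : Fin n → ℝ) (hv : Real.sqrt (∑ i, v i ^ 2) = 1)
    (t μ : ℝ) (ht : ∀ k, t ≠ d k) (htμ : t ≠ μ)
    (r : Fin n → ℝ)
    (hr : r = v - ∑ i ∈ Finset.univ.filter (fun i : Fin n => (i : ℕ) < m),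
      (q i ⬝ᵥ v) • q i)
    (p : Fin n → ℝ)
    (hp : p = Q *ᵥ (fun k => (q k ⬝ᵥ v) / (d k - t)))
    (pt : Fin n → ℝ)
    (hpt : pt = (∑ k ∈ Finset.univ.filter (fun k : Fin n => (k : ℕ) < m),
        ((q k ⬝ᵥ v) / (d k - t)) • q k) + (1 / (μ - t)) • r) :
    (∑ i, (p i - pt i) ^ 2 =
      ∑ k ∈ Finset.univ.filter (fun k : Fin n => m ≤ (k : ℕ)),
        ((μ - d k) * (q k ⬝ᵥ v) / ((μ - t) * (d k - t))) ^ 2) ∧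
    Real.sqrt (∑ i, (p i - pt i) ^ 2) ≤
      ((Finset.univ.filter (fun k : Fin n => m ≤ (k : ℕ))).sup'
          ⟨⟨m, hm⟩, by simp⟩ (fun k => |d k - μ|)) /
        (|μ - t| *
          (Finset.univ.filter (fun k : Fin n => m ≤ (k : ℕ))).inf'
            ⟨⟨m, hm⟩, by simp⟩ (fun k => |d k - t|)) := by
  set S : Finset (Fin n) := Finset.univ.filter (fun k : Fin n => m ≤ (k : ℕ)) with hS
  set T : Finset (Fin n) := Finset.univ.filter (fun i : Fin n => (i : ℕ) < m) with hT
  have hne : S.Nonempty := ⟨⟨m, hm⟩, by simp [hS]⟩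
  set w : Fin n → ℝ := fun k => q k ⬝ᵥ v with hw
  set a : Fin n → ℝ := fun k => (μ - d k) * (q k ⬝ᵥ v) / ((μ - t) * (d k - t)) with ha
  have hdk : ∀ k, d k - t ≠ 0 := fun k => sub_ne_zero.mpr (ht k).symm
  have hμt : μ - t ≠ 0 := sub_ne_zero.mpr (Ne.symm htμ)
  -- orthonormality of the columns
  have horth : ∀ k l : Fin n, (∑ i, q k i * q l i) = if k = l then 1 else 0 := by
    intro k l
    have := congrFun (congrFun hQ k) l
    simpa [Matrix.mul_apply, Matrix.one_apply, hq] using this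
  have hQQ : Q * Qᵀ = 1 := mul_eq_one_comm.mp hQ
  have hrow : ∀ i j : Fin n, (∑ k, q k i * q k j) = if i = j then 1 else 0 := by
    intro i j
    have := congrFun (congrFun hQQ i) j
    simpa [Matrix.mul_apply, Matrix.one_apply, hq, mul_comm] using this
  -- decomposition of v
  have hvdec : ∀ i, v i = ∑ k, w k * q k i := by
    intro i
    have h1 : ∑ k, w k * q k i = ∑ j, (∑ k, q k i * q k j) * v j := by
      simp_rw [hw, dotProduct, Finset.sum_mul]
      rw [Finset.sum_comm]
      refine Finset.sum_congr rfl fun j _ => ?_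
      refine Finset.sum_congr rfl fun k _ => by ring
    rw [h1]
    simp [hrow]
  -- splitting sums
  have hsplit : ∀ f : Fin n → ℝ, ∑ k ∈ T, f k + ∑ k ∈ S, f k = ∑ k, f k := by
    intro f
    rw [← Finset.sum_filter_add_sum_filter_not Finset.univ (fun k : Fin n => (k : ℕ) < m) f]
    congr 1
    apply Finset.sum_congr _ (fun _ _ => rfl)
    ext k
    simp [hS, not_lt]
  -- the error vector
  have he : ∀ i, p i - pt i = ∑ k ∈ S, a k * q k i := by
    intro i
    have hpi : p i = ∑ k, (w k / (d k - t)) * q k i := by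
      rw [hp]
      simp only [Matrix.mulVec, dotProduct]
      exact Finset.sum_congr rfl fun k _ => by simp only [hw, hq k i, dotProduct]; ring
    have hri : r i = ∑ k ∈ S, w k * q k i := by
      have h1 : r i = v i - ∑ k ∈ T, w k * q k i := by
        rw [hr]
        simp [Finset.sum_apply, Pi.smul_apply, smul_eq_mul]; rfl
      have h2 := hsplit (fun k => w k * q k i)
      have h3 := hvdec i
      rw [h1]; linarith
    have hpti : pt i = ∑ k ∈ T, (w k / (d k - t)) * q k i + (1 / (μ - t)) * r i := by
      rw [hpt]
      simp [Finset.sum_apply, Pi.smul_apply, smul_eq_mul]; rfl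
    rw [hpi, hpti, hri, ← hsplit (fun k => (w k / (d k - t)) * q k i)]
    rw [Finset.mul_sum]
    have : ∀ k ∈ S, a k * q k i = (w k / (d k - t)) * q k i - (1 / (μ - t)) * (w k * q k i) := by
      intro k _
      have hd := hdk k
      simp only [ha, hw]
      field_simp
      ring
    rw [Finset.sum_congr rfl this, Finset.sum_sub_distrib]
    ring
  -- the exact formula
  have hexact : ∑ i, (p i - pt i) ^ 2 = ∑ k ∈ S, a k ^ 2 := by
    simp_rw [he]
    exact sum_sq_orthonormal q horth S a
  refine ⟨hexact, ?_⟩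
  -- norm of v in coefficients
  have hv1 : ∑ i, v i ^ 2 = 1 := by
    have h0 : 0 ≤ ∑ i, v i ^ 2 := Finset.sum_nonneg fun i _ => sq_nonneg _
    exact Real.sqrt_eq_one.mp hv
  have hw1 : ∑ k, w k ^ 2 = 1 := by
    have : ∑ i, v i ^ 2 = ∑ k, w k ^ 2 := by
      calc ∑ i, v i ^ 2 = ∑ i, (∑ k ∈ Finset.univ, w k * q k i) ^ 2 := by
            refine Finset.sum_congr rfl fun i _ => by rw [← hvdec i]
        _ = ∑ k ∈ Finset.univ, w k ^ 2 := sum_sq_orthonormal q horth _ w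
    rw [← this, hv1]
  -- the bound
  set M : ℝ := S.sup' hne (fun k => |d k - μ|) with hM
  set mn : ℝ := S.inf' hne (fun k => |d k - t|) with hmn
  have hmnpos : 0 < mn := by
    rw [hmn, Finset.lt_inf'_iff]
    exact fun k _ => abs_pos.mpr (hdk k)
  have hμpos : 0 < |μ - t| := abs_pos.mpr hμt
  have hM0 : 0 ≤ M := le_trans (abs_nonneg (d hne.choose - μ)) (Finset.le_sup' (fun k => |d k - μ|) hne.choose_spec)
  have hB0 : 0 ≤ M / (|μ - t| * mn) := div_nonneg hM0 (le_of_lt (mul_pos hμpos hmnpos))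
  have hkey : ∀ k ∈ S, a k ^ 2 ≤ (M / (|μ - t| * mn)) ^ 2 * w k ^ 2 := by
    intro k hk
    have habs : |a k| ≤ (M / (|μ - t| * mn)) * |w k| := by
      have h1 : |a k| = |μ - d k| * |w k| / (|μ - t| * |d k - t|) := by
        rw [ha]; rw [abs_div, abs_mul, abs_mul]
      rw [h1, div_mul_eq_mul_div]
      apply div_le_div₀ (mul_nonneg hM0 (abs_nonneg _))
      · apply mul_le_mul_of_nonneg_right _ (abs_nonneg _)
        rw [abs_sub_comm]
        exact Finset.le_sup' (fun k => |d k - μ|) hk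
      · exact mul_pos hμpos hmnpos
      · exact mul_le_mul_of_nonneg_left (Finset.inf'_le _ hk) (le_of_lt hμpos)
    calc a k ^ 2 = |a k| ^ 2 := (sq_abs _).symm
      _ ≤ ((M / (|μ - t| * mn)) * |w k|) ^ 2 := by
          exact pow_le_pow_left₀ (abs_nonneg _) habs 2
      _ = (M / (|μ - t| * mn)) ^ 2 * w k ^ 2 := by rw [mul_pow, sq_abs]
  have hsum : ∑ i, (p i - pt i) ^ 2 ≤ (M / (|μ - t| * mn)) ^ 2 := by
    rw [hexact]
    calc ∑ k ∈ S, a k ^ 2 ≤ ∑ k ∈ S, (M / (|μ - t| * mn)) ^ 2 * w k ^ 2 :=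
          Finset.sum_le_sum hkey
      _ = (M / (|μ - t| * mn)) ^ 2 * ∑ k ∈ S, w k ^ 2 := by rw [Finset.mul_sum]
      _ ≤ (M / (|μ - t| * mn)) ^ 2 * 1 := by
          apply mul_le_mul_of_nonneg_left _ (sq_nonneg _)
          rw [← hw1]
          exact Finset.sum_le_sum_of_subset_of_nonneg (Finset.subset_univ S)
            (fun k _ _ => sq_nonneg _)
      _ = (M / (|μ - t| * mn)) ^ 2 := mul_one _
  calc Real.sqrt (∑ i, (p i - pt i) ^ 2) ≤ Real.sqrt ((M / (|μ - t| * mn)) ^ 2) :=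
        Real.sqrt_le_sqrt hsum
    _ = M / (|μ - t| * mn) := Real.sqrt_sq hB0
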